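/- arXiv:2111.00907 — 2 statements merged into one kernel-verified Lean document; each statement's English description precedes it below -/
import Mathlib

section
/- Let (X,ρ) be a separable metric space, μ a Borel probability measure on X, q ∈ ℝ, and ξ a premeasure on X. Then W^{q,ξ}_μ is a metric outer measure on X: it is monotone, vanishes on ∅, is countably subadditive, and satisfies W^{q,ξ}_μ(E ∪ F) = W^{q,ξ}_μ(E) + W^{q,ξ}_μ(F) whenever E, F ⊆ X satisfy ρ(E,F) := inf{ρ(x,y) : x∈E, y∈F} > 0. Consequently W^{q,ξ}_μ is a measure on the Borel σ-algebra of X. -/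
open Metric MeasureTheory Set Filter TopologicalSpace
open scoped ENNReal NNReal Classical

noncomputable section

/-- `x ^ q` for extended nonnegative reals, with the paper's convention
`0 ^ q = ∞` for `q ≤ 0`. -/
def epow (x : ℝ≥0∞) (q : ℝ) : ℝ≥0∞ := if x = 0 ∧ q ≤ 0 then ∞ else x ^ q

variable {X X' : Type*}

section Defs

variable [MetricSpace X] [MetricSpace X']

/-- A premeasure on a metric space: an increasing `[0,∞]`-valued function on the family of
closed balls, vanishing on the empty set. -/
def IsPremeasure (ξ : Set X → ℝ≥0∞) : Prop :=
  ξ ∅ = 0 ∧ ∀ (x : X) (r : ℝ) (x' : X) (r' : ℝ),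
    closedBall x r ⊆ closedBall x' r' → ξ (closedBall x r) ≤ ξ (closedBall x' r')

/-- The doubling ("blanketed") condition defining the class `Φ_D` of premeasures:
`ξ(B(x,2r)) ≤ K ξ(B(x,r))` for some constant `K > 1`, all `x` and all `0 < r ≤ 1`. -/
def PremeasureBlanketed (ξ : Set X → ℝ≥0∞) : Prop :=
  ∃ K : ℝ≥0, 1 < K ∧ ∀ (x : X) (r : ℝ), 0 < r → r ≤ 1 →
    ξ (closedBall x (2 * r)) ≤ (K : ℝ≥0∞) * ξ (closedBall x r)

variable [MeasurableSpace X] [MeasurableSpace X']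

/-- The support of a Borel measure on a metric space. -/
def measSupport (μ : Measure X) : Set X := {x : X | ∀ r : ℝ, 0 < r → 0 < μ (ball x r)}

/-- A blanketed (doubling) measure: for some `a > 1`,
`limsup_{r → 0⁺} sup_{x ∈ supp μ} μ(B(x,ar)) / μ(B(x,r)) < ∞`. -/
def MeasureBlanketed (μ : Measure X) : Prop :=
  ∃ a : ℝ, 1 < a ∧
    limsup (fun r : ℝ => ⨆ x ∈ measSupport μ,
      μ (closedBall x (a * r)) / μ (closedBall x r)) (nhdsWithin 0 (Ioi 0)) < ∞

/-- The quantity `μ(B)^q ξ(B)` attached to a ball `B`. -/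
def ballWeight (μ : Measure X) (q : ℝ) (ξ : Set X → ℝ≥0∞) (B : Set X) : ℝ≥0∞ :=
  epow (μ B) q * ξ B

/-- A centered `δ`-cover of `E`: countably many closed balls centered in `E`, of diameters
at most `2δ`, covering `E`. -/
def IsCenteredCover (E : Set X) (δ : ℝ) (c : ℕ → X) (r : ℕ → ℝ) : Prop :=
  (∀ i, c i ∈ E) ∧ (∀ i, diam (closedBall (c i) (r i)) ≤ 2 * δ) ∧
    E ⊆ ⋃ i, closedBall (c i) (r i)

/-- The pre-Hausdorff quantity `H^{q,ξ}_{μ,δ}(E)`. -/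
def Hd (μ : Measure X) (q : ℝ) (ξ : Set X → ℝ≥0∞) (δ : ℝ) (E : Set X) : ℝ≥0∞ :=
  if E = ∅ then 0 else
    ⨅ (c : ℕ → X) (r : ℕ → ℝ) (_ : IsCenteredCover E δ c r),
      ∑' i, ballWeight μ q ξ (closedBall (c i) (r i))

/-- `H^{q,ξ}_{μ,0}(E) = sup_{δ > 0} H^{q,ξ}_{μ,δ}(E)`. -/
def H0 (μ : Measure X) (q : ℝ) (ξ : Set X → ℝ≥0∞) (E : Set X) : ℝ≥0∞ :=
  ⨆ (δ : ℝ) (_ : 0 < δ), Hd μ q ξ δ E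

/-- The generalized Hausdorff measure `H^{q,ξ}_μ(E) = sup_{F ⊆ E} H^{q,ξ}_{μ,0}(F)`. -/
def HM (μ : Measure X) (q : ℝ) (ξ : Set X → ℝ≥0∞) (E : Set X) : ℝ≥0∞ :=
  ⨆ (F : Set X) (_ : F ⊆ E), H0 μ q ξ F

/-- A weighted and centered `δ`-cover of `E`: countably many pairs `(w i, B i)` of nonnegative
weights and closed balls centered in `E` of diameters at most `2δ`, with
`Σ {w i : x ∈ B i} ≥ 1` for every `x ∈ E`. -/
def IsWeightedCover (E : Set X) (δ : ℝ) (w : ℕ → ℝ≥0) (c : ℕ → X) (r : ℕ → ℝ) : Prop :=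
  (∀ i, c i ∈ E) ∧ (∀ i, diam (closedBall (c i) (r i)) ≤ 2 * δ) ∧
    ∀ x ∈ E, 1 ≤ ∑' i, (if x ∈ closedBall (c i) (r i) then (w i : ℝ≥0∞) else 0)

/-- The pre-weighted-Hausdorff quantity `W^{q,ξ}_{μ,δ}(E)`. -/
def Wd (μ : Measure X) (q : ℝ) (ξ : Set X → ℝ≥0∞) (δ : ℝ) (E : Set X) : ℝ≥0∞ :=
  if E = ∅ then 0 else
    ⨅ (w : ℕ → ℝ≥0) (c : ℕ → X) (r : ℕ → ℝ) (_ : IsWeightedCover E δ w c r),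
      ∑' i, (w i : ℝ≥0∞) * ballWeight μ q ξ (closedBall (c i) (r i))

/-- `W^{q,ξ}_{μ,0}(E) = sup_{δ > 0} W^{q,ξ}_{μ,δ}(E)`. -/
def W0 (μ : Measure X) (q : ℝ) (ξ : Set X → ℝ≥0∞) (E : Set X) : ℝ≥0∞ :=
  ⨆ (δ : ℝ) (_ : 0 < δ), Wd μ q ξ δ E

/-- The weighted generalized Hausdorff measure `W^{q,ξ}_μ(E) = sup_{F ⊆ E} W^{q,ξ}_{μ,0}(F)`. -/
def WM (μ : Measure X) (q : ℝ) (ξ : Set X → ℝ≥0∞) (E : Set X) : ℝ≥0∞ :=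
  ⨆ (F : Set X) (_ : F ⊆ E), W0 μ q ξ F

/-- Hypothesis (H) for `(X, ξ, μ)`: for every `ε > 0`, `X` can be covered by countably many
closed balls of diameters `< ε` on which `μ(B)^q ξ(B)` is finite. -/
def HypH (μ : Measure X) (q : ℝ) (ξ : Set X → ℝ≥0∞) : Prop :=
  ∀ ε : ℝ, 0 < ε → ∃ (c : ℕ → X) (r : ℕ → ℝ),
    (univ : Set X) ⊆ (⋃ i, closedBall (c i) (r i)) ∧
    (∀ i, diam (closedBall (c i) (r i)) < ε) ∧
    ∀ i, ballWeight μ q ξ (closedBall (c i) (r i)) < ∞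

/-- The product premeasure `ξ₀(B × B') = ξ(B) ξ'(B')` on the product space (whose closed balls
are exactly the products `B(x,r) × B(x',r)`), with the convention `0 ⬝ ∞ = ∞ ⬝ 0 = 0`. -/
def prodPre (ξ : Set X → ℝ≥0∞) (ξ' : Set X' → ℝ≥0∞) : Set (X × X') → ℝ≥0∞ :=
  fun S => ξ (Prod.fst '' S) * ξ' (Prod.snd '' S)

/-- Two sets are (positively) separated: `inf {ρ(x,y) : x ∈ E, y ∈ F} > 0`. -/
def SepSets (E F : Set X) : Prop := 0 < ⨅ x ∈ E, ⨅ y ∈ F, edist x y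

/-- The upper `(q,ξ)`-density of `ν` at `x` with respect to `μ`:
`limsup_{r → 0⁺} ν(B(x,r)) / (μ(B(x,r))^q ξ(B(x,r)))`. -/
def upperDensity (μ : Measure X) (q : ℝ) (ξ : Set X → ℝ≥0∞) (x : X) (ν : Measure X) : ℝ≥0∞ :=
  limsup (fun r : ℝ => ν (closedBall x r) / ballWeight μ q ξ (closedBall x r))
    (nhdsWithin 0 (Ioi 0))

/-- A Hausdorff function: right continuous, monotone increasing `h : [0,∞] → [0,∞]` with
`h(0) = 0` and `h(r) > 0` for `r > 0`. -/
def IsHausdorffFunction (h : ℝ≥0∞ → ℝ≥0∞) : Prop :=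
  Monotone h ∧ h 0 = 0 ∧ (∀ r : ℝ≥0∞, 0 < r → 0 < h r) ∧
    ∀ r : ℝ≥0∞, ContinuousWithinAt h (Ici r) r

/-- The premeasure `ξ_h` induced by a Hausdorff function: `ξ_h(B) = h(diam B)` for `B ≠ ∅`,
`ξ_h(∅) = 0`. -/
def hausPre (h : ℝ≥0∞ → ℝ≥0∞) : Set X → ℝ≥0∞ :=
  fun B => if B = ∅ then 0 else h (EMetric.diam B)

end Defs

section Thms

variable [MetricSpace X] [SeparableSpace X] [MeasurableSpace X] [BorelSpace X]
variable [MetricSpace X'] [SeparableSpace X'] [MeasurableSpace X'] [BorelSpace X']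


section AuxLemmas

set_option linter.unusedSectionVars false

variable {μ : Measure X} {q : ℝ} {ξ : Set X → ℝ≥0∞}

lemma Wd_le_of_cover {δ : ℝ} {E : Set X} (hE : E ≠ ∅) {w : ℕ → ℝ≥0} {c : ℕ → X} {r : ℕ → ℝ}
    (h : IsWeightedCover E δ w c r) :
    Wd μ q ξ δ E ≤ ∑' i, (w i : ℝ≥0∞) * ballWeight μ q ξ (closedBall (c i) (r i)) := by
  simp only [Wd, if_neg hE]
  exact iInf_le_of_le w (iInf_le_of_le c (iInf_le_of_le r (iInf_le _ h)))

lemma Wd_antitone {δ δ' : ℝ} (h : δ ≤ δ') (E : Set X) : Wd μ q ξ δ' E ≤ Wd μ q ξ δ E := by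
  rcases eq_or_ne E ∅ with rfl | hE
  · simp [Wd]
  have hrw : Wd μ q ξ δ E = ⨅ (w : ℕ → ℝ≥0) (c : ℕ → X) (r : ℕ → ℝ)
      (_ : IsWeightedCover E δ w c r),
      ∑' i, (w i : ℝ≥0∞) * ballWeight μ q ξ (closedBall (c i) (r i)) := by
    simp only [Wd, if_neg hE]
  rw [hrw]
  refine le_iInf fun w => le_iInf fun c => le_iInf fun r => le_iInf fun hc => ?_
  exact Wd_le_of_cover hE ⟨hc.1, fun i => (hc.2.1 i).trans (by linarith), hc.2.2⟩

lemma Wd_le_W0 {δ : ℝ} (hδ : 0 < δ) (E : Set X) : Wd μ q ξ δ E ≤ W0 μ q ξ E :=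
  le_iSup₂ (f := fun δ (_ : 0 < δ) => Wd μ q ξ δ E) δ hδ

lemma W0_le_WM {F E : Set X} (h : F ⊆ E) : W0 μ q ξ F ≤ WM μ q ξ E :=
  le_iSup₂ (f := fun F (_ : F ⊆ E) => W0 μ q ξ F) F h

lemma exists_good_cover {E U : Set X} (hEU : E ⊆ U) {x₀ : X} (hx₀ : x₀ ∈ U) {δ : ℝ}
    (hδ : 0 < δ) {η : ℝ≥0∞} (hη : Wd μ q ξ δ E < η) :
    ∃ (w : ℕ → ℝ≥0) (c : ℕ → X) (r : ℕ → ℝ),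
      (∀ i, c i ∈ U) ∧ (∀ i, diam (closedBall (c i) (r i)) ≤ 2 * δ) ∧
      (∀ x ∈ E, 1 ≤ ∑' i, (if x ∈ closedBall (c i) (r i) then (w i : ℝ≥0∞) else 0)) ∧
      ∑' i, (w i : ℝ≥0∞) * ballWeight μ q ξ (closedBall (c i) (r i)) ≤ η := by
  rcases eq_or_ne E ∅ with rfl | hE
  · refine ⟨fun _ => 0, fun _ => x₀, fun _ => -1, fun _ => hx₀, fun i => ?_, by simp, by simp⟩
    rw [closedBall_eq_empty.2 (by norm_num : (-1:ℝ) < 0), diam_empty]; linarith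
  · simp only [Wd, if_neg hE, iInf_lt_iff] at hη
    obtain ⟨w, c, r, hcov, hsum⟩ := hη
    exact ⟨w, c, r, fun i => hEU (hcov.1 i), hcov.2.1, hcov.2.2, hsum.le⟩

lemma Wd_iUnion_le {δ : ℝ} (hδ : 0 < δ) (A : ℕ → Set X) :
    Wd μ q ξ δ (⋃ n, A n) ≤ ∑' n, Wd μ q ξ δ (A n) := by
  rcases eq_or_ne (⋃ n, A n) ∅ with hU | hU
  · simp [Wd, hU]
  obtain ⟨x₀, hx₀⟩ := nonempty_iff_ne_empty.mpr hU
  refine ENNReal.le_of_forall_pos_le_add fun ε hε hfin => ?_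
  have hεne : ((ε : ℝ≥0∞)) ≠ 0 := by exact_mod_cast hε.ne'
  obtain ⟨ε', hε'pos, hε'sum⟩ := ENNReal.exists_pos_sum_of_countable' hεne ℕ
  have hlt : ∀ n, Wd μ q ξ δ (A n) < Wd μ q ξ δ (A n) + ε' n := fun n =>
    ENNReal.lt_add_right (ne_top_of_le_ne_top hfin.ne (ENNReal.le_tsum n)) (hε'pos n).ne'
  choose w c r hcU hdiam hcov hsum using fun n =>
    exists_good_cover (subset_iUnion A n) hx₀ hδ (hlt n)
  set e : ℕ ≃ ℕ × ℕ := (Denumerable.eqv (ℕ × ℕ)).symm with he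
  have hWcover : IsWeightedCover (⋃ n, A n) δ (fun i => w (e i).1 (e i).2)
      (fun i => c (e i).1 (e i).2) (fun i => r (e i).1 (e i).2) := by
    refine ⟨fun i => hcU _ _, fun i => hdiam _ _, fun x hx => ?_⟩
    obtain ⟨n, hn⟩ := mem_iUnion.mp hx
    calc (1:ℝ≥0∞) ≤ ∑' j, (if x ∈ closedBall (c n j) (r n j) then (w n j : ℝ≥0∞) else 0) :=
          hcov n x hn
      _ ≤ ∑' p : ℕ × ℕ, (if x ∈ closedBall (c p.1 p.2) (r p.1 p.2)
            then (w p.1 p.2 : ℝ≥0∞) else 0) := by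
          rw [ENNReal.tsum_prod
            (f := fun a b => if x ∈ closedBall (c a b) (r a b) then (w a b : ℝ≥0∞) else 0)]
          exact ENNReal.le_tsum n
      _ = _ := (Equiv.tsum_eq e fun p : ℕ × ℕ =>
          (if x ∈ closedBall (c p.1 p.2) (r p.1 p.2) then (w p.1 p.2 : ℝ≥0∞) else 0)).symm
  calc Wd μ q ξ δ (⋃ n, A n)
      ≤ ∑' i, ((w (e i).1 (e i).2 : ℝ≥0∞))
          * ballWeight μ q ξ (closedBall (c (e i).1 (e i).2) (r (e i).1 (e i).2)) :=
        Wd_le_of_cover hU hWcover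
    _ = ∑' p : ℕ × ℕ, (w p.1 p.2 : ℝ≥0∞)
          * ballWeight μ q ξ (closedBall (c p.1 p.2) (r p.1 p.2)) :=
        Equiv.tsum_eq e (fun p : ℕ × ℕ => (w p.1 p.2 : ℝ≥0∞)
          * ballWeight μ q ξ (closedBall (c p.1 p.2) (r p.1 p.2)))
    _ = ∑' n, ∑' j, (w n j : ℝ≥0∞) * ballWeight μ q ξ (closedBall (c n j) (r n j)) :=
        ENNReal.tsum_prod (f := fun n j =>
          (w n j : ℝ≥0∞) * ballWeight μ q ξ (closedBall (c n j) (r n j)))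
    _ ≤ ∑' n, (Wd μ q ξ δ (A n) + ε' n) := ENNReal.tsum_le_tsum fun n => hsum n
    _ = (∑' n, Wd μ q ξ δ (A n)) + ∑' n, ε' n := ENNReal.tsum_add
    _ ≤ (∑' n, Wd μ q ξ δ (A n)) + ε := add_le_add_right hε'sum.le _

lemma Wd_restrict {δ : ℝ} (hδ : 0 < δ) {A U : Set X} (hAU : A ⊆ U) {w : ℕ → ℝ≥0}
    {c : ℕ → X} {r : ℕ → ℝ} (hcov : IsWeightedCover U δ w c r)
    (havoid : ∀ i, c i ∉ A → ∀ x ∈ A, x ∉ closedBall (c i) (r i)) :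
    Wd μ q ξ δ A ≤ ∑' i, (if c i ∈ A then (w i : ℝ≥0∞) else 0)
      * ballWeight μ q ξ (closedBall (c i) (r i)) := by
  rcases eq_or_ne A ∅ with rfl | hA
  · simp [Wd]
  obtain ⟨a₀, ha₀⟩ := nonempty_iff_ne_empty.mpr hA
  set w' : ℕ → ℝ≥0 := fun i => if c i ∈ A then w i else 0 with hw'
  set c' : ℕ → X := fun i => if c i ∈ A then c i else a₀ with hc'
  set r' : ℕ → ℝ := fun i => if c i ∈ A then r i else -1 with hr'
  have hcover : IsWeightedCover A δ w' c' r' := by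
    refine ⟨fun i => ?_, fun i => ?_, fun x hx => ?_⟩
    · by_cases h : c i ∈ A <;> simp [hc', h, ha₀]
    · by_cases h : c i ∈ A
      · simpa [hc', hr', h] using hcov.2.1 i
      · simp only [hc', hr', if_neg h]
        rw [closedBall_eq_empty.2 (by norm_num : (-1:ℝ) < 0), diam_empty]; linarith
    · refine (hcov.2.2 x (hAU hx)).trans (le_of_eq (tsum_congr fun i => ?_))
      by_cases h : c i ∈ A
      · simp [hw', hc', hr', h]
      · have hx' : x ∉ closedBall (c i) (r i) := havoid i h x hx
        simp [hw', hc', hr', h, hx']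
  refine (Wd_le_of_cover hA hcover).trans (le_of_eq (tsum_congr fun i => ?_))
  by_cases h : c i ∈ A <;> simp [hw', hc', hr', h]

lemma W0_add_le_of_sep {A B : Set X} (h : SepSets A B) :
    W0 μ q ξ A + W0 μ q ξ B ≤ W0 μ q ξ (A ∪ B) := by
  obtain ⟨d, hd0, hds⟩ := exists_between h
  have hdtop : d ≠ ∞ := hds.ne_top
  have hdr : 0 < d.toReal := ENNReal.toReal_pos hd0.ne' hdtop
  set δ₀ : ℝ := d.toReal / 4 with hδ₀def
  have hδ₀ : 0 < δ₀ := by positivity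
  have hsep : ∀ y ∈ A, ∀ z ∈ B, d ≤ edist y z := fun y hy z hz =>
    hds.le.trans ((iInf₂_le y hy).trans (iInf₂_le z hz))
  have hdisj : ∀ z, z ∈ A → z ∈ B → False := fun z hzA hzB => by
    have hd := hsep z hzA z hzB
    rw [edist_self] at hd
    exact hd0.not_ge hd
  have key : ∀ (δ : ℝ), δ ≤ δ₀ → ∀ (cc : X) (rr : ℝ), diam (closedBall cc rr) ≤ 2*δ →
      ∀ x, x ∈ closedBall cc rr → edist cc x < d := by
    intro δ hδδ₀ cc rr hdiam x hx
    have hrr : 0 ≤ rr := le_trans dist_nonneg (mem_closedBall.mp hx)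
    have hcc : cc ∈ closedBall cc rr := mem_closedBall_self hrr
    have h1 : dist cc x ≤ 2*δ :=
      le_trans (dist_le_diam_of_mem isBounded_closedBall hcc hx) hdiam
    have h2 : dist cc x < d.toReal := by
      have : (2:ℝ)*δ ≤ 2*δ₀ := by linarith
      rw [hδ₀def] at this
      linarith
    have h3 : edist cc x < ENNReal.ofReal d.toReal := edist_lt_ofReal.mpr h2
    rwa [ENNReal.ofReal_toReal hdtop] at h3
  have main : ∀ δ, 0 < δ → δ ≤ δ₀ →
      Wd μ q ξ δ A + Wd μ q ξ δ B ≤ Wd μ q ξ δ (A ∪ B) := by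
    intro δ hδ hδδ₀
    rcases eq_or_ne (A ∪ B) ∅ with hAB | hAB
    · rw [union_empty_iff] at hAB
      simp [Wd, hAB.1, hAB.2]
    rw [show Wd μ q ξ δ (A ∪ B) = ⨅ (w : ℕ → ℝ≥0) (c : ℕ → X) (r : ℕ → ℝ)
        (_ : IsWeightedCover (A ∪ B) δ w c r),
        ∑' i, (w i : ℝ≥0∞) * ballWeight μ q ξ (closedBall (c i) (r i))
      from by simp only [Wd, if_neg hAB]]
    refine le_iInf fun w => le_iInf fun c => le_iInf fun r => le_iInf fun hc => ?_
    have havoidA : ∀ i, c i ∉ A → ∀ x ∈ A, x ∉ closedBall (c i) (r i) := by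
      intro i hci x hx hmem
      have hciB : c i ∈ B := (hc.1 i).resolve_left hci
      have h1 := key δ hδδ₀ (c i) (r i) (hc.2.1 i) x hmem
      have h2 := hsep x hx (c i) hciB
      rw [edist_comm] at h2
      exact h1.not_ge h2
    have havoidB : ∀ i, c i ∉ B → ∀ x ∈ B, x ∉ closedBall (c i) (r i) := by
      intro i hci x hx hmem
      have hciA : c i ∈ A := (hc.1 i).resolve_right hci
      have h1 := key δ hδδ₀ (c i) (r i) (hc.2.1 i) x hmem
      exact h1.not_ge (hsep (c i) hciA x hx)
    refine le_trans (add_le_add (Wd_restrict hδ subset_union_left hc havoidA)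
      (Wd_restrict hδ subset_union_right hc havoidB)) (le_of_eq ?_)
    rw [← ENNReal.tsum_add]
    refine tsum_congr fun i => ?_
    by_cases h : c i ∈ A
    · have hB : c i ∉ B := fun hB => hdisj _ h hB
      simp [h, hB]
    · have hB : c i ∈ B := (hc.1 i).resolve_left h
      simp [h, hB]
  refine ENNReal.biSup_add_biSup_le' (p := fun δ : ℝ => 0 < δ) (q := fun δ : ℝ => 0 < δ)
    ⟨1, one_pos⟩ ⟨1, one_pos⟩ fun δ₁ h₁ δ₂ h₂ => ?_
  set δ := min δ₁ (min δ₂ δ₀) with hδdef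
  have hδ : 0 < δ := lt_min h₁ (lt_min h₂ hδ₀)
  have hδδ₀ : δ ≤ δ₀ := le_trans (min_le_right _ _) (min_le_right _ _)
  calc Wd μ q ξ δ₁ A + Wd μ q ξ δ₂ B
      ≤ Wd μ q ξ δ A + Wd μ q ξ δ B :=
        add_le_add (Wd_antitone (min_le_left _ _) A)
          (Wd_antitone (le_trans (min_le_right _ _) (min_le_left _ _)) B)
    _ ≤ Wd μ q ξ δ (A ∪ B) := main δ hδ hδδ₀
    _ ≤ W0 μ q ξ (A ∪ B) := Wd_le_W0 hδ _

lemma WM_empty : WM μ q ξ (∅ : Set X) = 0 := by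
  refine le_antisymm (iSup₂_le fun F hF => ?_) zero_le
  rw [subset_empty_iff] at hF
  subst hF
  exact iSup₂_le fun δ hδ => by simp [Wd]

lemma WM_mono {E F : Set X} (h : E ⊆ F) : WM μ q ξ E ≤ WM μ q ξ F :=
  iSup₂_le fun A hA => W0_le_WM (hA.trans h)

lemma WM_iUnion_le (E : ℕ → Set X) : WM μ q ξ (⋃ n, E n) ≤ ∑' n, WM μ q ξ (E n) := by
  refine iSup₂_le fun F hF => iSup₂_le fun δ hδ => ?_
  have hF' : F = ⋃ n, F ∩ E n := by
    ext x
    simp only [mem_iUnion, mem_inter_iff]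
    constructor
    · intro hx
      obtain ⟨n, hn⟩ := mem_iUnion.mp (hF hx)
      exact ⟨n, hx, hn⟩
    · rintro ⟨n, hx, -⟩
      exact hx
  calc Wd μ q ξ δ F = Wd μ q ξ δ (⋃ n, F ∩ E n) := by rw [← hF']
    _ ≤ ∑' n, Wd μ q ξ δ (F ∩ E n) := Wd_iUnion_le hδ _
    _ ≤ ∑' n, WM μ q ξ (E n) := ENNReal.tsum_le_tsum fun n =>
        (Wd_le_W0 hδ _).trans (W0_le_WM inter_subset_right)

lemma SepSets.mono {A B E F : Set X} (h : SepSets E F) (hA : A ⊆ E) (hB : B ⊆ F) :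
    SepSets A B := by
  refine lt_of_lt_of_le h (le_iInf₂ fun x hx => le_iInf₂ fun y hy => ?_)
  exact le_trans (iInf₂_le x (hA hx)) (iInf₂_le y (hB hy))

lemma WM_union_of_sep {E F : Set X} (h : SepSets E F) :
    WM μ q ξ (E ∪ F) = WM μ q ξ E + WM μ q ξ F := by
  refine le_antisymm ?_ ?_
  · -- subadditivity via binary split
    refine iSup₂_le fun A hA => iSup₂_le fun δ hδ => ?_
    have hsplit : A = (A ∩ E) ∪ (A \ E) := (inter_union_diff A E).symm
    set S : ℕ → Set X := fun n => if n = 0 then A ∩ E else if n = 1 then A \ E else ∅ with hS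
    have hAU : A = ⋃ n, S n := by
      apply Subset.antisymm
      · intro x hx
        by_cases hxE : x ∈ E
        · exact mem_iUnion.mpr ⟨0, by simp [hS, hx, hxE]⟩
        · exact mem_iUnion.mpr ⟨1, by simp [hS, hx, hxE]⟩
      · intro x hx
        obtain ⟨n, hn⟩ := mem_iUnion.mp hx
        simp only [hS] at hn
        split_ifs at hn with h0 h1
        · exact hn.1
        · exact hn.1
        · exact absurd hn (notMem_empty x)
    have hsum : ∑' n, Wd μ q ξ δ (S n) = Wd μ q ξ δ (A ∩ E) + Wd μ q ξ δ (A \ E) := by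
      rw [tsum_eq_sum (s := {0, 1}) (f := fun n => Wd μ q ξ δ (S n)) ?_]
      · simp [hS]
      · intro n hn
        simp only [Finset.mem_insert, Finset.mem_singleton] at hn
        push_neg at hn
        simp [Wd, hS, hn.1, hn.2]
    calc Wd μ q ξ δ A = Wd μ q ξ δ (⋃ n, S n) := by rw [← hAU]
      _ ≤ ∑' n, Wd μ q ξ δ (S n) := Wd_iUnion_le hδ _
      _ = Wd μ q ξ δ (A ∩ E) + Wd μ q ξ δ (A \ E) := hsum
      _ ≤ WM μ q ξ E + WM μ q ξ F := by
          refine add_le_add ((Wd_le_W0 hδ _).trans (W0_le_WM inter_subset_right))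
            ((Wd_le_W0 hδ _).trans (W0_le_WM ?_))
          intro x hx
          rcases hA hx.1 with hxE | hxF
          · exact absurd hxE hx.2
          · exact hxF
  · refine ENNReal.biSup_add_biSup_le' (p := fun A : Set X => A ⊆ E)
      (q := fun B : Set X => B ⊆ F) ⟨∅, empty_subset _⟩ ⟨∅, empty_subset _⟩
      fun A hA B hB => ?_
    exact (W0_add_le_of_sep (h.mono hA hB)).trans
      (W0_le_WM (union_subset_union hA hB))

end AuxLemmas

theorem stmt5 (μ : Measure X) [IsProbabilityMeasure μ]
    (q : ℝ) (ξ : Set X → ℝ≥0∞) (hξ : IsPremeasure ξ) :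
    WM μ q ξ ∅ = 0 ∧
    (∀ E F : Set X, E ⊆ F → WM μ q ξ E ≤ WM μ q ξ F) ∧
    (∀ E : ℕ → Set X, WM μ q ξ (⋃ n, E n) ≤ ∑' n, WM μ q ξ (E n)) ∧
    (∀ E F : Set X, SepSets E F → WM μ q ξ (E ∪ F) = WM μ q ξ E + WM μ q ξ F) ∧
    (∀ B : Set X, MeasurableSet B → ∀ A : Set X,
      WM μ q ξ A = WM μ q ξ (A ∩ B) + WM μ q ξ (A \ B)) := by
  classical
  set m : OuterMeasure X :=
    { measureOf := WM μ q ξ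
      empty := WM_empty
      mono := fun h => WM_mono h
      iUnion_nat := fun s _ => WM_iUnion_le s } with hm
  have hmeval : ∀ s : Set X, m s = WM μ q ξ s := fun s => rfl
  have hmetric : m.IsMetric := by
    intro s t hst
    obtain ⟨d, hd0, hd⟩ := hst
    have hsep : SepSets s t := by
      refine lt_of_lt_of_le (pos_iff_ne_zero.mpr hd0) ?_
      exact le_iInf₂ fun x hx => le_iInf₂ fun y hy => hd x hx y hy
    exact le_antisymm (WM_union_of_sep hsep).le (WM_union_of_sep hsep).ge
  refine ⟨WM_empty, fun E F h => WM_mono h, fun E => WM_iUnion_le E,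
    fun E F h => WM_union_of_sep h, fun B hB A => ?_⟩
  have hBc : MeasurableSet[m.caratheodory] B := by
    refine hmetric.borel_le_caratheodory B ?_
    rwa [BorelSpace.measurable_eq (α := X)] at hB
  exact (OuterMeasure.isCaratheodory_iff m).mp hBc A


end Thms
end
end

section
/- Let (X,ρ) and (X',ρ') be separable metric spaces, q ∈ ℝ, μ a Borel probability measure on X, ν a Borel probability measure on X', and h, h' Hausdorff functions. Then for any E ⊆ X and F ⊆ X', W^{q,h×h'}_{μ×ν}(E×F) ≥ W^{q,h}_μ(E) · W^{q,h'}_ν(F), where the product space X×X' carries the metric max(ρ,ρ') and the measure W^{q,h×h'}_{μ×ν} is constructed from the premeasure ξ_{h×h'} on X×X'. -/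
open Metric MeasureTheory Set Filter TopologicalSpace
open scoped ENNReal NNReal Classical

noncomputable section

variable {X X' : Type*}

section Thms

section Aux

variable {Y Y' : Type*} [MetricSpace Y] [MetricSpace Y']
variable [MeasurableSpace Y] [MeasurableSpace Y']

lemma epow_mul_eq {a b : ℝ≥0∞} (ha : a ≠ ∞) (hb : b ≠ ∞) (q : ℝ) :
    epow (a * b) q = epow a q * epow b q := by
  simp only [epow, mul_eq_zero]
  by_cases hq : q ≤ 0
  · by_cases ha0 : a = 0
    · by_cases hb0 : b = 0
      · simp [ha0, hb0, hq]
      · rw [if_pos ⟨Or.inl ha0, hq⟩, if_pos ⟨ha0, hq⟩, if_neg (fun hc => hb0 hc.1),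
          ENNReal.top_mul (ENNReal.rpow_pos (pos_iff_ne_zero.mpr hb0) hb).ne']
    · by_cases hb0 : b = 0
      · rw [if_pos ⟨Or.inr hb0, hq⟩, if_neg (fun hc => ha0 hc.1), if_pos ⟨hb0, hq⟩,
          ENNReal.mul_top (ENNReal.rpow_pos (pos_iff_ne_zero.mpr ha0) ha).ne']
      · rw [if_neg (fun hc => hc.1.elim ha0 hb0), if_neg (fun hc => ha0 hc.1),
          if_neg (fun hc => hb0 hc.1), ENNReal.mul_rpow_of_ne_top ha hb]
  · simp only [hq, and_false, if_false]
    exact ENNReal.mul_rpow_of_nonneg a b (le_of_not_ge hq)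

lemma ediam_fst (p : Y × Y') (r : ℝ) :
    EMetric.diam (closedBall p.1 r) ≤ EMetric.diam (closedBall p r) := by
  rcases lt_or_ge r 0 with hr | hr
  · simp [Metric.closedBall_eq_empty.mpr hr]
    exact (EMetric.diam_subsingleton subsingleton_empty).le.trans zero_le
  · refine EMetric.diam_le fun x hx y hy => ?_
    have hx' : (x, p.2) ∈ closedBall p r := by
      rw [mem_closedBall, Prod.dist_eq]
      exact max_le (mem_closedBall.mp hx) (by simpa using hr)
    have hy' : (y, p.2) ∈ closedBall p r := by
      rw [mem_closedBall, Prod.dist_eq]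
      exact max_le (mem_closedBall.mp hy) (by simpa using hr)
    calc edist x y ≤ edist (x, p.2) (y, p.2) := by
          rw [Prod.edist_eq]; exact le_max_left _ _
      _ ≤ _ := EMetric.edist_le_diam_of_mem hx' hy'

lemma ediam_snd (p : Y × Y') (r : ℝ) :
    EMetric.diam (closedBall p.2 r) ≤ EMetric.diam (closedBall p r) := by
  rcases lt_or_ge r 0 with hr | hr
  · simp [Metric.closedBall_eq_empty.mpr hr]
    exact (EMetric.diam_subsingleton subsingleton_empty).le.trans zero_le
  · refine EMetric.diam_le fun x hx y hy => ?_
    have hx' : (p.1, x) ∈ closedBall p r := by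
      rw [mem_closedBall, Prod.dist_eq]
      exact max_le (by simpa using hr) (mem_closedBall.mp hx)
    have hy' : (p.1, y) ∈ closedBall p r := by
      rw [mem_closedBall, Prod.dist_eq]
      exact max_le (by simpa using hr) (mem_closedBall.mp hy)
    calc edist x y ≤ edist (p.1, x) (p.1, y) := by
          rw [Prod.edist_eq]; exact le_max_right _ _
      _ ≤ _ := EMetric.edist_le_diam_of_mem hx' hy'

lemma mdiam_fst (p : Y × Y') (r : ℝ) :
    diam (closedBall p.1 r) ≤ diam (closedBall p r) :=
  ENNReal.toReal_mono (Metric.isBounded_closedBall).ediam_ne_top (ediam_fst p r)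

lemma mdiam_snd (p : Y × Y') (r : ℝ) :
    diam (closedBall p.2 r) ≤ diam (closedBall p r) :=
  ENNReal.toReal_mono (Metric.isBounded_closedBall).ediam_ne_top (ediam_snd p r)

lemma hausPre_prod {h h' : ℝ≥0∞ → ℝ≥0∞} (hmono : Monotone h) (hmono' : Monotone h')
    (p : Y × Y') (r : ℝ) :
    hausPre h (closedBall p.1 r) * hausPre h' (closedBall p.2 r) ≤
      hausPre (fun s => h s * h' s) (closedBall p r) := by
  rcases lt_or_ge r 0 with hr | hr
  · simp [hausPre, Metric.closedBall_eq_empty, hr]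
  · have h1 : closedBall p.1 r ≠ ∅ := by
      rw [Ne, Metric.closedBall_eq_empty]; exact not_lt.mpr hr
    have h2 : closedBall p.2 r ≠ ∅ := by
      rw [Ne, Metric.closedBall_eq_empty]; exact not_lt.mpr hr
    have h3 : closedBall p r ≠ ∅ := by
      rw [Ne, Metric.closedBall_eq_empty]; exact not_lt.mpr hr
    unfold hausPre
    rw [if_neg h1, if_neg h2, if_neg h3]
    exact mul_le_mul' (hmono (ediam_fst p r)) (hmono' (ediam_snd p r))

lemma ballWeight_prod (μ : Measure Y) [IsProbabilityMeasure μ]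
    (ν : Measure Y') [IsProbabilityMeasure ν] (q : ℝ)
    {h h' : ℝ≥0∞ → ℝ≥0∞} (hmono : Monotone h) (hmono' : Monotone h')
    (p : Y × Y') (r : ℝ) :
    ballWeight μ q (hausPre h) (closedBall p.1 r) *
        ballWeight ν q (hausPre h') (closedBall p.2 r) ≤
      ballWeight (μ.prod ν) q (hausPre fun s => h s * h' s) (closedBall p r) := by
  unfold ballWeight
  have hm : (μ.prod ν) (closedBall p r) = μ (closedBall p.1 r) * ν (closedBall p.2 r) := by
    rw [show closedBall p r = closedBall p.1 r ×ˢ closedBall p.2 r from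
      (closedBall_prod_same _ _ _).symm, Measure.prod_prod]
  rw [hm, epow_mul_eq (measure_ne_top μ _) (measure_ne_top ν _), mul_mul_mul_comm]
  exact mul_le_mul_right (hausPre_prod hmono hmono' p r) _

lemma Wd_le (μ : Measure Y) (q : ℝ) (ξ : Set Y → ℝ≥0∞) (δ : ℝ) (E : Set Y)
    (w : ℕ → ℝ≥0) (c : ℕ → Y) (r : ℕ → ℝ) (hc : IsWeightedCover E δ w c r) :
    Wd μ q ξ δ E ≤ ∑' i, (w i : ℝ≥0∞) * ballWeight μ q ξ (closedBall (c i) (r i)) := by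
  unfold Wd
  split_ifs with hE
  · exact zero_le
  · exact iInf_le_of_le w (iInf_le_of_le c (iInf_le_of_le r (iInf_le _ hc)))

lemma Wd_anti (μ : Measure Y) (q : ℝ) (ξ : Set Y → ℝ≥0∞) {δ δ' : ℝ} (hδ : δ ≤ δ')
    (E : Set Y) : Wd μ q ξ δ' E ≤ Wd μ q ξ δ E := by
  unfold Wd
  split_ifs with hE
  · exact le_refl _
  · refine le_iInf fun w => le_iInf fun c => le_iInf fun r => le_iInf fun hc => ?_
    have hc' : IsWeightedCover E δ' w c r :=
      ⟨hc.1, fun i => le_trans (hc.2.1 i) (by linarith), hc.2.2⟩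
    exact iInf_le_of_le w (iInf_le_of_le c (iInf_le_of_le r (iInf_le _ hc')))

lemma Wd_prod (q : ℝ) (μ : Measure Y) [IsProbabilityMeasure μ]
    (ν : Measure Y') [IsProbabilityMeasure ν]
    {h h' : ℝ≥0∞ → ℝ≥0∞} (hmono : Monotone h) (hmono' : Monotone h')
    (A : Set Y) (B : Set Y') (δ : ℝ) :
    Wd μ q (hausPre h) δ A * Wd ν q (hausPre h') δ B ≤
      Wd (μ.prod ν) q (hausPre fun s => h s * h' s) δ (A ×ˢ B) := by
  by_cases hA : A = ∅
  · rw [show Wd μ q (hausPre h) δ A = 0 from by unfold Wd; rw [if_pos hA], zero_mul]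
    exact zero_le
  by_cases hB : B = ∅
  · rw [show Wd ν q (hausPre h') δ B = 0 from by unfold Wd; rw [if_pos hB], mul_zero]
    exact zero_le
  have hAB : A ×ˢ B ≠ ∅ := fun hc => (Set.prod_eq_empty_iff.mp hc).elim hA hB
  rw [show Wd (μ.prod ν) q (hausPre fun s => h s * h' s) δ (A ×ˢ B) =
      ⨅ (w : ℕ → ℝ≥0) (c : ℕ → Y × Y') (r : ℕ → ℝ)
        (_ : IsWeightedCover (A ×ˢ B) δ w c r),
        ∑' i, (w i : ℝ≥0∞) * ballWeight (μ.prod ν) q (hausPre fun s => h s * h' s)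
          (closedBall (c i) (r i)) from by unfold Wd; rw [if_neg hAB]]
  refine le_iInf fun w => le_iInf fun c => le_iInf fun r => le_iInf fun hcov => ?_
  set u := Wd μ q (hausPre h) δ A with hu_def
  set v := Wd ν q (hausPre h') δ B with hv_def
  set bw1 : ℕ → ℝ≥0∞ := fun i => ballWeight μ q (hausPre h) (closedBall (c i).1 (r i))
    with hbw1
  set bw2 : ℕ → ℝ≥0∞ := fun i => ballWeight ν q (hausPre h') (closedBall (c i).2 (r i))
    with hbw2
  set g : ℕ → ℝ≥0∞ := fun i => (w i : ℝ≥0∞) * bw1 i with hg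
  have hmem : ∀ (i : ℕ) (x : Y) (y : Y'), ((x, y) ∈ closedBall (c i) (r i)) ↔
      x ∈ closedBall (c i).1 (r i) ∧ y ∈ closedBall (c i).2 (r i) := by
    intro i x y
    rw [show closedBall (c i) (r i) = closedBall (c i).1 (r i) ×ˢ closedBall (c i).2 (r i)
      from (closedBall_prod_same _ _ _).symm]
    exact Set.mem_prod
  have claim1 : ∀ y ∈ B, u ≤ ∑' i, (if y ∈ closedBall (c i).2 (r i) then g i else 0) := by
    intro y hy
    have hcA : IsWeightedCover A δ
        (fun i => if y ∈ closedBall (c i).2 (r i) then w i else 0) (fun i => (c i).1) r := by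
      refine ⟨fun i => (hcov.1 i).1, fun i => le_trans (mdiam_fst _ _) (hcov.2.1 i), ?_⟩
      intro x hx
      refine le_trans (hcov.2.2 (x, y) ⟨hx, hy⟩) (le_of_eq (tsum_congr fun i => ?_))
      by_cases hx1 : x ∈ closedBall (c i).1 (r i) <;>
        by_cases hy1 : y ∈ closedBall (c i).2 (r i) <;>
          simp [hmem i x y, hx1, hy1]
    refine le_trans (Wd_le μ q (hausPre h) δ A _ _ _ hcA)
      (le_of_eq (tsum_congr fun i => ?_))
    by_cases hy1 : y ∈ closedBall (c i).2 (r i) <;> simp [hy1, hg, hbw1]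
  have hterm : ∀ i, g i * bw2 i ≤ (w i : ℝ≥0∞) *
      ballWeight (μ.prod ν) q (hausPre fun s => h s * h' s) (closedBall (c i) (r i)) := by
    intro i
    calc g i * bw2 i = (w i : ℝ≥0∞) * (bw1 i * bw2 i) := by
          rw [hg]; exact mul_assoc _ _ _
      _ ≤ _ := mul_le_mul_right (ballWeight_prod μ ν q hmono hmono' (c i) (r i)) _
  refine le_trans ?_ (ENNReal.tsum_le_tsum hterm)
  set S := ∑' i, g i * bw2 i with hS_def
  by_cases hv0 : v = 0
  · rw [hv0, mul_zero]; exact zero_le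
  by_cases hStop : S = ∞
  · rw [hStop]; exact le_top
  have key : ∀ a : ℝ≥0, a ≠ 0 → (a : ℝ≥0∞) < u → (a : ℝ≥0∞) * v ≤ S := by
    intro a ha0 hau
    have hane : (a : ℝ≥0∞) ≠ 0 := ENNReal.coe_ne_zero.mpr ha0
    set v' : ℕ → ℝ≥0 := fun i => if g i = ∞ then 1 else ((g i) / a).toNNReal with hv'
    have hcoe : ∀ i, g i ≠ ∞ → ((v' i : ℝ≥0∞)) = g i * (a : ℝ≥0∞)⁻¹ := by
      intro i hgi
      rw [hv']
      simp only [hgi, if_false]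
      rw [ENNReal.coe_toNNReal (ENNReal.div_lt_top hgi hane).ne, div_eq_mul_inv]
    have hcovB : IsWeightedCover B δ v' (fun i => (c i).2) r := by
      refine ⟨fun i => (hcov.1 i).2, fun i => le_trans (mdiam_snd _ _) (hcov.2.1 i), ?_⟩
      intro y hy
      show (1 : ℝ≥0∞) ≤ ∑' i, (if y ∈ closedBall (c i).2 (r i) then (v' i : ℝ≥0∞) else 0)
      by_cases hex : ∃ i, y ∈ closedBall (c i).2 (r i) ∧ g i = ∞
      · obtain ⟨i, hyi, hgi⟩ := hex
        refine le_trans ?_ (ENNReal.le_tsum i)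
        simp [hv', hyi, hgi]
      · push_neg at hex
        have heq : ∀ i, (if y ∈ closedBall (c i).2 (r i) then (v' i : ℝ≥0∞) else 0) =
            (if y ∈ closedBall (c i).2 (r i) then g i else 0) * (a : ℝ≥0∞)⁻¹ := by
          intro i
          by_cases hyi : y ∈ closedBall (c i).2 (r i)
          · rw [if_pos hyi, if_pos hyi, hcoe i (hex i hyi)]
          · rw [if_neg hyi, if_neg hyi, zero_mul]
        rw [tsum_congr heq, ENNReal.tsum_mul_right]
        calc (1 : ℝ≥0∞) = (a : ℝ≥0∞) * (a : ℝ≥0∞)⁻¹ :=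
              (ENNReal.mul_inv_cancel hane ENNReal.coe_ne_top).symm
          _ ≤ _ := mul_le_mul_left (le_trans hau.le (claim1 y hy)) _
    have hvle : v ≤ ∑' i, (v' i : ℝ≥0∞) * bw2 i :=
      Wd_le ν q (hausPre h') δ B _ _ _ hcovB
    have hsum : ∑' i, (v' i : ℝ≥0∞) * bw2 i ≤ S * (a : ℝ≥0∞)⁻¹ := by
      rw [hS_def, ← ENNReal.tsum_mul_right]
      refine ENNReal.tsum_le_tsum fun i => ?_
      by_cases hgi : g i = ∞
      · have hb0 : bw2 i = 0 := by
          by_contra hb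
          exact hStop (top_unique (le_trans
            (le_of_eq (by rw [hgi, ENNReal.top_mul hb])) (ENNReal.le_tsum i)))
        rw [hb0, mul_zero]
        exact zero_le
      · rw [hcoe i hgi, mul_right_comm]
    calc (a : ℝ≥0∞) * v ≤ (a : ℝ≥0∞) * (S * (a : ℝ≥0∞)⁻¹) :=
          mul_le_mul_right (le_trans hvle hsum) _
      _ = S := by
          rw [mul_comm S, ← mul_assoc, ENNReal.mul_inv_cancel hane ENNReal.coe_ne_top,
            one_mul]
  rw [← ENNReal.le_div_iff_mul_le (Or.inl hv0) (Or.inr hStop)]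
  refine ENNReal.le_of_forall_nnreal_lt fun a hau => ?_
  by_cases ha0 : a = 0
  · simp [ha0]
  rw [ENNReal.le_div_iff_mul_le (Or.inl hv0) (Or.inr hStop)]
  exact key a ha0 hau

lemma W0_prod (q : ℝ) (μ : Measure Y) [IsProbabilityMeasure μ]
    (ν : Measure Y') [IsProbabilityMeasure ν]
    {h h' : ℝ≥0∞ → ℝ≥0∞} (hmono : Monotone h) (hmono' : Monotone h')
    (A : Set Y) (B : Set Y') :
    W0 μ q (hausPre h) A * W0 ν q (hausPre h') B ≤
      W0 (μ.prod ν) q (hausPre fun s => h s * h' s) (A ×ˢ B) := by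
  unfold W0
  rw [ENNReal.iSup_mul]
  refine iSup_le fun δ₁ => ?_
  rw [ENNReal.iSup_mul]
  refine iSup_le fun hδ₁ => ?_
  rw [ENNReal.mul_iSup]
  refine iSup_le fun δ₂ => ?_
  rw [ENNReal.mul_iSup]
  refine iSup_le fun hδ₂ => ?_
  have hm : 0 < min δ₁ δ₂ := lt_min hδ₁ hδ₂
  refine le_trans (mul_le_mul' (Wd_anti μ q _ (min_le_left δ₁ δ₂) A)
    (Wd_anti ν q _ (min_le_right δ₁ δ₂) B)) ?_
  refine le_trans (Wd_prod q μ ν hmono hmono' A B (min δ₁ δ₂)) ?_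
  exact le_iSup₂ (f := fun δ (_ : 0 < δ) =>
    Wd (μ.prod ν) q (hausPre fun s => h s * h' s) δ (A ×ˢ B)) (min δ₁ δ₂) hm

end Aux



variable [MetricSpace X] [SeparableSpace X] [MeasurableSpace X] [BorelSpace X]
variable [MetricSpace X'] [SeparableSpace X'] [MeasurableSpace X'] [BorelSpace X']

theorem stmt16 (q : ℝ) (μ : Measure X) [IsProbabilityMeasure μ]
    (ν : Measure X') [IsProbabilityMeasure ν]
    (h h' : ℝ≥0∞ → ℝ≥0∞) (hh : IsHausdorffFunction h) (hh' : IsHausdorffFunction h')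
    (E : Set X) (F : Set X') :
    WM μ q (hausPre h) E * WM ν q (hausPre h') F ≤
      WM (μ.prod ν) q (hausPre fun r => h r * h' r) (E ×ˢ F) := by
  unfold WM
  rw [ENNReal.iSup_mul]
  refine iSup_le fun A => ?_
  rw [ENNReal.iSup_mul]
  refine iSup_le fun hA => ?_
  rw [ENNReal.mul_iSup]
  refine iSup_le fun B => ?_
  rw [ENNReal.mul_iSup]
  refine iSup_le fun hB => ?_
  refine le_trans (W0_prod q μ ν hh.1 hh'.1 A B) ?_
  exact le_iSup₂ (f := fun G (_ : G ⊆ E ×ˢ F) =>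
    W0 (μ.prod ν) q (hausPre fun s => h s * h' s) G) (A ×ˢ B) (Set.prod_mono hA hB)


end Thms
end
end
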